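/- arXiv:1905.01512 — 3 statements merged into one kernel-verified Lean document; each statement's English description precedes it below -/
import Mathlib

section
/- Let Λ = M·ℤ^d where M is an invertible d×d real matrix with det M = 1, and let Λ* = (Mᵀ)⁻¹·ℤ^d be its dual lattice. Let L be a k-dimensional linear subspace of ℝ^d such that Γ = L ∩ Λ is a lattice of rank k. Then Γ^⊥ = L^⊥ ∩ Λ* is a lattice of rank d − k, and the covolume (determinant) of Γ^⊥ equals the covolume of Γ. -/
open Matrix
open scoped RealInnerProductSpace

section Helpers

lemma euclid_sum_apply {d : ℕ} {m : Type*} (s : Finset m) (f : m → EuclideanSpace ℝ (Fin d))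
    (r : Fin d) : (∑ i ∈ s, f i) r = ∑ i ∈ s, f i r :=
  by rw [WithLp.ofLp_sum, Finset.sum_apply]

lemma euclid_smul_apply {d : ℕ} (a : ℝ) (w : EuclideanSpace ℝ (Fin d)) (r : Fin d) :
    (a • w) r = a * w r := rfl

lemma euclid_inner_eq {d : ℕ} (x y : EuclideanSpace ℝ (Fin d)) : ⟪x, y⟫ = ∑ i, x i * y i := by
  simp [PiLp.inner_apply, RCLike.inner_apply, mul_comm]

lemma mulVec_sum' {d : ℕ} {m : Type*} (s : Finset m) (M : Matrix (Fin d) (Fin d) ℝ)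
    (f : m → (Fin d → ℝ)) : M.mulVec (∑ i ∈ s, f i) = ∑ i ∈ s, M.mulVec (f i) :=
  map_sum M.mulVecLin f s

lemma cast_sum_smul {d : ℕ} {m : Type*} (s : Finset m) (c : m → ℤ) (x : m → (Fin d → ℤ)) :
    (fun j => ((∑ i ∈ s, c i • x i) j : ℝ)) = ∑ i ∈ s, (c i : ℝ) • (fun j => (x i j : ℝ)) := by
  funext j
  rw [Finset.sum_apply, Finset.sum_apply]
  push_cast
  apply Finset.sum_congr rfl
  intro i _
  simp [Pi.smul_apply]

lemma key_comb {d : ℕ} {m : Type*} (s : Finset m) (M : Matrix (Fin d) (Fin d) ℝ) (c : m → ℝ)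
    (x : m → (Fin d → ℤ)) (bb : m → EuclideanSpace ℝ (Fin d))
    (hbb : ∀ i r, bb i r = M.mulVec (fun j => (x i j : ℝ)) r) (r : Fin d) :
    (∑ i ∈ s, c i • bb i) r = M.mulVec (∑ i ∈ s, c i • (fun j => (x i j : ℝ))) r := by
  rw [euclid_sum_apply, mulVec_sum', Finset.sum_apply]
  apply Finset.sum_congr rfl
  intro i _
  rw [euclid_smul_apply, hbb i r, Matrix.mulVec_smul]
  rfl

lemma map_mul_int {d : ℕ} (U W : Matrix (Fin d) (Fin d) ℤ) :
    (U * W).map (Int.cast : ℤ → ℝ) = U.map (Int.cast : ℤ → ℝ) * W.map (Int.cast : ℤ → ℝ) := by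
  ext i j
  simp [Matrix.mul_apply, Matrix.map_apply]

lemma jacobi_block {ι κ : Type*} [Fintype ι] [Fintype κ] [DecidableEq ι] [DecidableEq κ]
    (G H : Matrix (ι ⊕ κ) (ι ⊕ κ) ℝ) (h1 : G * H = 1) (h2 : H * G = 1)
    [ha : Invertible (G.toBlocks₁₁)] :
    (H.toBlocks₂₂).det * G.det = (G.toBlocks₁₁).det := by
  set A := G.toBlocks₁₁ with hA
  set B := G.toBlocks₁₂
  set C := G.toBlocks₂₁
  set D := G.toBlocks₂₂
  set P := H.toBlocks₁₁
  set Q := H.toBlocks₁₂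
  set R := H.toBlocks₂₁
  set S := H.toBlocks₂₂
  have hG : G = fromBlocks A B C D := (fromBlocks_toBlocks G).symm
  have hH : H = fromBlocks P Q R S := (fromBlocks_toBlocks H).symm
  rw [hG, hH, fromBlocks_multiply, ← fromBlocks_one] at h1 h2
  have e12 : A * Q + B * S = 0 := by
    have := congrArg Matrix.toBlocks₁₂ h1
    simp only [toBlocks_fromBlocks₁₂] at this; exact this
  have e22 : C * Q + D * S = 1 := by
    have := congrArg Matrix.toBlocks₂₂ h1
    simp only [toBlocks_fromBlocks₂₂] at this; exact this
  have f21 : R * A + S * C = 0 := by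
    have := congrArg Matrix.toBlocks₂₁ h2
    simp only [toBlocks_fromBlocks₂₁] at this; exact this
  have f22 : R * B + S * D = 1 := by
    have := congrArg Matrix.toBlocks₂₂ h2
    simp only [toBlocks_fromBlocks₂₂] at this; exact this
  have hQ : Q = -(⅟A * B * S) := by
    have h : A * Q = -(B * S) := by
      simpa [sub_eq_iff_eq_add] using eq_neg_of_add_eq_zero_left e12
    calc Q = ⅟A * (A * Q) := by rw [← Matrix.mul_assoc, invOf_mul_self, Matrix.one_mul]
    _ = -(⅟A * B * S) := by rw [h, Matrix.mul_neg, Matrix.mul_assoc]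
  have hR : R = -(S * C * ⅟A) := by
    have h : R * A = -(S * C) := eq_neg_of_add_eq_zero_left f21
    calc R = (R * A) * ⅟A := by rw [Matrix.mul_assoc, mul_invOf_self, Matrix.mul_one]
    _ = -(S * C * ⅟A) := by rw [h, Matrix.neg_mul]
  have key2 : S * (D - C * ⅟A * B) = 1 := by
    rw [hR, Matrix.neg_mul] at f22
    calc S * (D - C * ⅟A * B) = -(S * C * ⅟A * B) + S * D := by
          rw [Matrix.mul_sub, ← Matrix.mul_assoc, ← Matrix.mul_assoc, sub_eq_add_neg, add_comm]
    _ = 1 := f22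
  have hdet : S.det * (D - C * ⅟A * B).det = 1 := by
    rw [← Matrix.det_mul, key2, Matrix.det_one]
  rw [hG, Matrix.det_fromBlocks₁₁]
  calc S.det * (A.det * (D - C * ⅟A * B).det)
      = A.det * (S.det * (D - C * ⅟A * B).det) := by ring
  _ = A.det := by rw [hdet, mul_one]

lemma exists_basis_ext {d k : ℕ} (hk : k ≤ d) (x : Fin k → (Fin d → ℤ))
    (hind : LinearIndependent ℤ x)
    (hsat : ∀ (v : Fin d → ℤ) (n : ℤ), n ≠ 0 →
      n • v ∈ Submodule.span ℤ (Set.range x) → v ∈ Submodule.span ℤ (Set.range x)) :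
    ∃ u : Module.Basis (Fin k ⊕ Fin (d - k)) ℤ (Fin d → ℤ), ∀ i, u (Sum.inl i) = x i := by
  classical
  set N : Submodule ℤ (Fin d → ℤ) := Submodule.span ℤ (Set.range x) with hN
  let bN : Module.Basis (Fin k) ℤ N := Module.Basis.span hind
  haveI : NoZeroSMulDivisors ℤ ((Fin d → ℤ) ⧸ N) := by
    constructor
    intro c q h
    by_cases hc : c = 0
    · exact Or.inl hc
    · right
      obtain ⟨v, rfl⟩ := N.mkQ_surjective q
      have h0 : N.mkQ (c • v) = 0 := by rw [_root_.map_smul]; exact h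
      have hv : c • v ∈ N := by
        rwa [Submodule.mkQ_apply, Submodule.Quotient.mk_eq_zero] at h0
      have hvN := hsat v c hc hv
      rw [Submodule.mkQ_apply, Submodule.Quotient.mk_eq_zero]
      exact hvN
  haveI : Module.Free ℤ ((Fin d → ℤ) ⧸ N) := Module.free_of_finite_type_torsion_free'
  obtain ⟨s, hs⟩ := Module.projective_lifting_property N.mkQ
    (LinearMap.id : ((Fin d → ℤ) ⧸ N) →ₗ[ℤ] _) N.mkQ_surjective
  have hsid : ∀ q, N.mkQ (s q) = q := fun q => LinearMap.congr_fun hs q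
  let f : (Fin d → ℤ) →ₗ[ℤ] N × ((Fin d → ℤ) ⧸ N) :=
    LinearMap.prod ((LinearMap.id - s ∘ₗ N.mkQ).codRestrict N (by
      intro v
      have h0 : N.mkQ (v - s (N.mkQ v)) = 0 := by rw [map_sub, hsid, sub_self]
      rwa [Submodule.mkQ_apply, Submodule.Quotient.mk_eq_zero] at h0)) N.mkQ
  let g : (N × ((Fin d → ℤ) ⧸ N)) →ₗ[ℤ] (Fin d → ℤ) :=
    N.subtype ∘ₗ LinearMap.fst ℤ _ _ + s ∘ₗ LinearMap.snd ℤ _ _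
  have hfg : f ∘ₗ g = LinearMap.id := by
    apply LinearMap.ext
    rintro ⟨⟨n, hn⟩, q⟩
    have h1 : N.mkQ n = 0 := by simpa [Submodule.Quotient.mk_eq_zero] using hn
    have h1' : (Submodule.Quotient.mk n : (Fin d → ℤ) ⧸ N) = 0 := h1
    have h2' : (Submodule.Quotient.mk (s q) : (Fin d → ℤ) ⧸ N) = q := hsid q
    apply Prod.ext
    · apply Subtype.ext
      simp [f, g, LinearMap.codRestrict, h1', h2']
    · simp [f, g, h1', h2']
  have hgf : g ∘ₗ f = LinearMap.id := by
    apply LinearMap.ext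
    intro v
    simp [f, g, LinearMap.codRestrict]
  let e : (Fin d → ℤ) ≃ₗ[ℤ] N × ((Fin d → ℤ) ⧸ N) := LinearEquiv.ofLinear f g hfg hgf
  let bQ := Module.Free.chooseBasis ℤ ((Fin d → ℤ) ⧸ N)
  have hcard : Fintype.card (Module.Free.ChooseBasisIndex ℤ ((Fin d → ℤ) ⧸ N)) = d - k := by
    have h1 : Module.finrank ℤ (Fin d → ℤ) = d := by simp [Module.finrank_pi]
    have h2 : Module.finrank ℤ (Fin d → ℤ) =
        Module.finrank ℤ N + Module.finrank ℤ ((Fin d → ℤ) ⧸ N) := by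
      rw [e.finrank_eq, Module.finrank_prod]
    have h3 : Module.finrank ℤ N = k := by
      rw [Module.finrank_eq_card_basis bN, Fintype.card_fin]
    have h4 : Module.finrank ℤ ((Fin d → ℤ) ⧸ N) =
        Fintype.card (Module.Free.ChooseBasisIndex ℤ ((Fin d → ℤ) ⧸ N)) :=
      Module.finrank_eq_card_chooseBasisIndex ℤ _
    omega
  let eκ := Fintype.equivFinOfCardEq hcard
  refine ⟨((bN.prod bQ).map e.symm).reindex (Equiv.sumCongr (Equiv.refl (Fin k)) eκ), ?_⟩
  intro i
  have h1 : (bN.prod bQ) (Sum.inl i) = (bN i, 0) := by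
    apply Prod.ext
    · simp [Module.Basis.prod_apply_inl_fst]
    · simp [Module.Basis.prod_apply_inl_snd]
  have h2 : e.symm (bN i, 0) = (bN i : Fin d → ℤ) := by
    simp [e, g]
  simp only [Module.Basis.reindex_apply, Equiv.sumCongr_symm, Equiv.sumCongr_apply, Equiv.symm_symm,
    Sum.map_inl, Equiv.refl_symm, Equiv.refl_apply]
  rw [Module.Basis.map_apply, h1, h2]
  exact congrArg Subtype.val (Module.Basis.span_apply hind i)

lemma gram_det_ne_zero {E : Type*} [NormedAddCommGroup E] [InnerProductSpace ℝ E] {k : ℕ}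
    {v : Fin k → E} (hv : LinearIndependent ℝ v) :
    (Matrix.of fun i j => ⟪v i, v j⟫).det ≠ 0 := by
  intro h
  obtain ⟨c, hc0, hc⟩ := (Matrix.exists_mulVec_eq_zero_iff).mpr h
  have hw : (∑ i, c i • v i) = 0 := by
    have hnorm : ⟪∑ i, c i • v i, ∑ j, c j • v j⟫ = 0 := by
      rw [sum_inner]
      have : ∀ i ∈ Finset.univ, ⟪c i • v i, ∑ j, c j • v j⟫ =
          c i * ((Matrix.of fun i j => ⟪v i, v j⟫).mulVec c) i := by
        intro i _
        rw [real_inner_smul_left, inner_sum]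
        congr 1
        rw [Matrix.mulVec]
        simp [dotProduct, real_inner_smul_right, mul_comm]
      rw [Finset.sum_congr rfl this]
      simp [hc]
    exact inner_self_eq_zero.mp hnorm
  have := linearIndependent_iff'.mp hv Finset.univ c (by simpa using hw)
  exact hc0 (funext fun i => this i (Finset.mem_univ i))

end Helpers

/-- Let `Λ = M ℤ^d` with `det M = 1`, and `Λ* = (Mᵀ)⁻¹ ℤ^d` its dual lattice.
If `L` is a `k`-dimensional subspace and `Γ = L ∩ Λ` is a lattice of rank `k`
(given by a ℤ-basis `b` of linearly independent vectors), then `Γ^⊥ = L^⊥ ∩ Λ*`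
is a lattice of rank `d - k` and its covolume (square root of the Gram
determinant of a ℤ-basis) equals that of `Γ`. -/
theorem orthogonal_sublattice_duality (d k : ℕ) (hd : 1 ≤ d) (hk : k ≤ d)
    (M : Matrix (Fin d) (Fin d) ℝ) (hM : M.det = 1)
    (L : Submodule ℝ (EuclideanSpace ℝ (Fin d)))
    (hL : Module.finrank ℝ L = k)
    (Λ Λd : Set (EuclideanSpace ℝ (Fin d)))
    (hΛ : Λ = {v | ∃ x : Fin d → ℤ, ∀ i, v i = M.mulVec (fun j => (x j : ℝ)) i})
    (hΛd : Λd = {v | ∃ x : Fin d → ℤ, ∀ i, v i = (M.transpose)⁻¹.mulVec (fun j => (x j : ℝ)) i})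
    (b : Fin k → EuclideanSpace ℝ (Fin d))
    (hbmem : ∀ i, b i ∈ (L : Set (EuclideanSpace ℝ (Fin d))) ∩ Λ)
    (hbind : LinearIndependent ℝ b)
    (hbspan : (L : Set (EuclideanSpace ℝ (Fin d))) ∩ Λ
      = {v | ∃ c : Fin k → ℤ, v = ∑ i, (c i : ℝ) • b i}) :
    ∃ bp : Fin (d - k) → EuclideanSpace ℝ (Fin d),
      (∀ i, bp i ∈ (Lᗮ : Set (EuclideanSpace ℝ (Fin d))) ∩ Λd) ∧
      LinearIndependent ℝ bp ∧
      ((Lᗮ : Set (EuclideanSpace ℝ (Fin d))) ∩ Λd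
        = {v | ∃ c : Fin (d - k) → ℤ, v = ∑ i, (c i : ℝ) • bp i}) ∧
      Real.sqrt (Matrix.det (Matrix.of fun i j => ⟪bp i, bp j⟫)) =
        Real.sqrt (Matrix.det (Matrix.of fun i j => ⟪b i, b j⟫)) := by
  classical
  subst hΛ
  subst hΛd
  have hMdet : IsUnit M.det := by rw [hM]; exact isUnit_one
  haveI : Invertible M := M.invertibleOfIsUnitDet hMdet
  have hbx : ∀ i, ∃ x : Fin d → ℤ, ∀ r, b i r = M.mulVec (fun j => (x j : ℝ)) r :=
    fun i => (hbmem i).2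
  choose xx hxx using hbx
  set xc : Fin k → (Fin d → ℝ) := fun i j => (xx i j : ℝ) with hxc
  -- real independence of the coordinate vectors
  have hxcind : LinearIndependent ℝ xc := by
    rw [linearIndependent_iff']
    intro s g hsum i hi
    have hbsum : ∑ j ∈ s, g j • b j = 0 := by
      ext r
      rw [key_comb s M g xx b hxx r]
      have : (∑ j ∈ s, g j • fun l => ((xx j l : ℝ))) = 0 := hsum
      rw [this]
      simp
    exact linearIndependent_iff'.mp hbind s g hbsum i hi
  -- integer independence
  have hxxind : LinearIndependent ℤ xx := by
    rw [linearIndependent_iff']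
    intro s g hsum i hi
    have hcast : ∑ j ∈ s, (g j : ℝ) • xc j = 0 := by
      rw [← cast_sum_smul s g xx]
      funext j
      rw [hsum]
      simp
    exact_mod_cast linearIndependent_iff'.mp hxcind s (fun j => (g j : ℝ)) hcast i hi
  -- span of b is L
  have hLspan : Submodule.span ℝ (Set.range b) = L := by
    apply Submodule.eq_of_le_of_finrank_le
    · rw [Submodule.span_le]
      rintro _ ⟨i, rfl⟩
      exact (hbmem i).1
    · rw [hL, finrank_span_eq_card hbind, Fintype.card_fin]
  -- saturation
  have hsat : ∀ (v : Fin d → ℤ) (n : ℤ), n ≠ 0 →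
      n • v ∈ Submodule.span ℤ (Set.range xx) → v ∈ Submodule.span ℤ (Set.range xx) := by
    intro v n hn hnv
    rw [Submodule.mem_span_range_iff_exists_fun] at hnv ⊢
    obtain ⟨c, hc⟩ := hnv
    set w : EuclideanSpace ℝ (Fin d) := WithLp.toLp 2 (fun r => M.mulVec (fun j => (v j : ℝ)) r) with hw
    have hsum : ∑ i, (c i : ℝ) • b i = (n : ℝ) • w := by
      ext r
      rw [key_comb Finset.univ M _ xx b hxx r, ← cast_sum_smul, hc]
      show M.mulVec (fun j => (((n • v) j : ℤ) : ℝ)) r = (n : ℝ) * M.mulVec (fun j => (v j : ℝ)) r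
      have hcast2 : (fun j => (((n • v) j : ℤ) : ℝ)) = (n : ℝ) • (fun j => ((v j : ℤ) : ℝ)) := by
        funext j
        simp only [Pi.smul_apply, smul_eq_mul]
        push_cast
        ring
      rw [hcast2, Matrix.mulVec_smul]
      rfl
    have hwL : w ∈ L := by
      have h5 : (n : ℝ) • w ∈ L := by
        rw [← hsum]
        exact Submodule.sum_mem _ (fun i _ => Submodule.smul_mem _ _ (hbmem i).1)
      exact (Submodule.smul_mem_iff L (Int.cast_ne_zero.mpr hn)).mp h5
    have hwmem : w ∈ (L : Set (EuclideanSpace ℝ (Fin d))) ∩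
        {v | ∃ x : Fin d → ℤ, ∀ i, v i = M.mulVec (fun j => (x j : ℝ)) i} :=
      ⟨hwL, ⟨v, fun r => rfl⟩⟩
    rw [hbspan] at hwmem
    obtain ⟨c', hc'⟩ := hwmem
    refine ⟨c', ?_⟩
    have h6 : ∀ r, M.mulVec (fun j => ((∑ i, c' i • xx i) j : ℝ)) r
        = M.mulVec (fun j => (v j : ℝ)) r := by
      intro r
      have h7 : w r = (∑ i, (c' i : ℝ) • b i) r := congrArg (fun x : EuclideanSpace ℝ (Fin d) => x r) hc'
      rw [key_comb Finset.univ M _ xx b hxx r, ← cast_sum_smul] at h7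
      exact h7.symm
    have h8 : (fun j => ((∑ i, c' i • xx i) j : ℝ)) = (fun j => (v j : ℝ)) :=
      M.mulVec_injective_of_invertible (funext h6)
    funext j
    exact_mod_cast congrFun h8 j
  -- extend to a basis of ℤ^d
  obtain ⟨u, hu⟩ := exists_basis_ext hk xx hxxind hsat
  have hks : k + (d - k) = d := Nat.add_sub_cancel' hk
  set σ : (Fin k ⊕ Fin (d - k)) ≃ Fin d := finSumFinEquiv.trans (finCongr hks) with hσ
  set ubasis : Module.Basis (Fin d) ℤ (Fin d → ℤ) := u.reindex σ with hubasis
  set U : Matrix (Fin d) (Fin d) ℤ := ((Pi.basisFun ℤ (Fin d)).toMatrix ubasis) with hUdef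
  haveI instU : Invertible U := (Pi.basisFun ℤ (Fin d)).invertibleToMatrix ubasis
  have hUent : ∀ l j, U l j = ubasis j l := by
    intro l j
    rw [hUdef, Module.Basis.toMatrix_apply, Pi.basisFun_repr]
  set Uℝ : Matrix (Fin d) (Fin d) ℝ := U.map (Int.cast : ℤ → ℝ) with hUR
  haveI instUR : Invertible Uℝ := by
    have h : Uℝ = (Int.castRingHom ℝ).mapMatrix U := rfl
    rw [h]
    exact Invertible.map ((Int.castRingHom ℝ).mapMatrix :
      Matrix (Fin d) (Fin d) ℤ →+* Matrix (Fin d) (Fin d) ℝ) U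
  set A : Matrix (Fin d) (Fin d) ℝ := M * Uℝ with hA
  haveI instA : Invertible A := invertibleMul M Uℝ
  haveI instAT : Invertible Aᵀ := invertibleTranspose A
  set B : Matrix (Fin d) (Fin d) ℝ := ⅟(Aᵀ) with hB
  have hAtB : Aᵀ * B = 1 := by rw [hB]; exact mul_invOf_self Aᵀ
  have hBAt : B * Aᵀ = 1 := by rw [hB]; exact invOf_mul_self Aᵀ
  -- column description of A
  have hAcol : ∀ r p, A r p = M.mulVec (fun j => ((ubasis p j : ℤ) : ℝ)) r := by
    intro r p
    rw [hA, Matrix.mul_apply]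
    simp only [Matrix.mulVec, dotProduct, hUR, Matrix.map_apply, hUent]
  have hbcol : ∀ i r, b i r = A r (σ (Sum.inl i)) := by
    intro i r
    rw [hAcol]
    have : ubasis (σ (Sum.inl i)) = xx i := by
      rw [hubasis, Module.Basis.reindex_apply, Equiv.symm_apply_apply, hu i]
    rw [this]
    exact hxx i r
  -- columns of A as Euclidean vectors
  set va : Fin d → EuclideanSpace ℝ (Fin d) := fun p => WithLp.toLp 2 (fun r => A r p) with hva
  have hbva : ∀ i, b i = va (σ (Sum.inl i)) := by
    intro i; ext r; exact hbcol i r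
  set bp : Fin (d - k) → EuclideanSpace ℝ (Fin d) :=
    fun i => WithLp.toLp 2 (fun r => B r (σ (Sum.inr i))) with hbp
  -- duality pairing
  have hdelta : ∀ p i, ⟪va p, bp i⟫ = if p = σ (Sum.inr i) then 1 else 0 := by
    intro p i
    rw [euclid_inner_eq]
    have h : ∑ r, va p r * bp i r = (Aᵀ * B) p (σ (Sum.inr i)) := by
      rw [Matrix.mul_apply]
      apply Finset.sum_congr rfl
      intro r _
      rfl
    rw [h, hAtB, Matrix.one_apply]
  have hdeltab : ∀ j i, ⟪b j, bp i⟫ = 0 := by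
    intro j i
    rw [hbva j, hdelta]
    have : σ (Sum.inl j) ≠ σ (Sum.inr i) := by
      intro hcon
      exact Sum.inl_ne_inr (σ.injective hcon)
    simp [this]
  -- bp lies in Lᗮ
  have hbpLperp : ∀ i, bp i ∈ Lᗮ := by
    intro i
    rw [Submodule.mem_orthogonal]
    intro uu huu
    rw [← hLspan] at huu
    induction huu using Submodule.span_induction with
    | mem y hy =>
        obtain ⟨j, rfl⟩ := hy
        exact hdeltab j i
    | zero => simp
    | add y z _ _ hy hz => rw [inner_add_left, hy, hz, add_zero]
    | smul a y _ hy => rw [real_inner_smul_left, hy, mul_zero]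
  -- integer description of columns of B
  haveI instUT : Invertible Uᵀ := invertibleTranspose U
  set W : Matrix (Fin d) (Fin d) ℤ := ⅟(Uᵀ) with hW
  set Wr : Matrix (Fin d) (Fin d) ℝ := W.map (Int.cast : ℤ → ℝ) with hWr
  have hUrT : Uℝᵀ = (Uᵀ).map (Int.cast : ℤ → ℝ) := by
    ext i j; rfl
  have hWrUr : Wr * Uℝᵀ = 1 := by
    rw [hWr, hUrT, ← map_mul_int, invOf_mul_self]
    simp
  have hUrWr : Uℝᵀ * Wr = 1 := by
    rw [hWr, hUrT, ← map_mul_int, mul_invOf_self]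
    simp
  have hMTdet : IsUnit Mᵀ.det := by rw [Matrix.det_transpose, hM]; exact isUnit_one
  have hBform : B = (Mᵀ)⁻¹ * Wr := by
    rw [hB]
    apply invOf_eq_right_inv
    rw [hA, Matrix.transpose_mul]
    calc Uℝᵀ * Mᵀ * ((Mᵀ)⁻¹ * Wr) = Uℝᵀ * (Mᵀ * (Mᵀ)⁻¹) * Wr := by
          rw [Matrix.mul_assoc, Matrix.mul_assoc, Matrix.mul_assoc]
    _ = Uℝᵀ * Wr := by rw [Matrix.mul_nonsing_inv Mᵀ hMTdet, Matrix.mul_one]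
    _ = 1 := hUrWr
  have hbpcol : ∀ i r, bp i r = (Mᵀ)⁻¹.mulVec (fun l => ((W l (σ (Sum.inr i)) : ℤ) : ℝ)) r := by
    intro i r
    show B r (σ (Sum.inr i)) = _
    rw [hBform, Matrix.mul_apply]
    simp only [Matrix.mulVec, dotProduct, hWr, Matrix.map_apply]
  have hbpΛd : ∀ i, bp i ∈ {v : EuclideanSpace ℝ (Fin d) |
      ∃ x : Fin d → ℤ, ∀ r, v r = (Mᵀ)⁻¹.mulVec (fun j => (x j : ℝ)) r} :=
    fun i => ⟨fun l => W l (σ (Sum.inr i)), hbpcol i⟩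
  -- linear independence of bp
  have hbpind : LinearIndependent ℝ bp := by
    rw [linearIndependent_iff']
    intro s g hsum i hi
    have h0 : ⟪va (σ (Sum.inr i)), ∑ j ∈ s, g j • bp j⟫ = 0 := by rw [hsum, inner_zero_right]
    rw [inner_sum] at h0
    have h1 : ∀ j ∈ s, ⟪va (σ (Sum.inr i)), g j • bp j⟫ = if j = i then g j else 0 := by
      intro j _
      rw [real_inner_smul_right, hdelta]
      have : σ (Sum.inr i) = σ (Sum.inr j) ↔ j = i := by
        rw [σ.apply_eq_iff_eq]
        constructor
        · intro h; exact (Sum.inr_injective h).symm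
        · intro h; rw [h]
      by_cases hji : j = i
      · simp [hji]
      · have : ¬ (σ (Sum.inr i) = σ (Sum.inr j)) := fun hcon => hji (this.mp hcon)
        simp [hji, this]
    rw [Finset.sum_congr rfl h1, Finset.sum_ite_eq' s i g] at h0
    simpa [hi] using h0
  -- the span equality
  have hspan2 : (Lᗮ : Set (EuclideanSpace ℝ (Fin d))) ∩ {v : EuclideanSpace ℝ (Fin d) |
      ∃ x : Fin d → ℤ, ∀ r, v r = (Mᵀ)⁻¹.mulVec (fun j => (x j : ℝ)) r}
      = {v | ∃ c : Fin (d - k) → ℤ, v = ∑ i, (c i : ℝ) • bp i} := by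
    ext v
    constructor
    · rintro ⟨hvp, z, hz⟩
      set cI : Fin d → ℤ := (Uᵀ).mulVec z with hcI
      have hcast : (fun p => ((cI p : ℤ) : ℝ)) = (Uℝᵀ).mulVec (fun j => ((z j : ℤ) : ℝ)) := by
        funext p
        rw [hcI]
        simp only [Matrix.mulVec, dotProduct, hUrT, Matrix.map_apply]
        push_cast
        rfl
      have hvB : ∀ r, v r = ∑ p, (cI p : ℝ) * B r p := by
        intro r
        rw [hz r]
        have h1 : B.mulVec (fun p => ((cI p : ℤ) : ℝ)) =
            (Mᵀ)⁻¹.mulVec (fun j => ((z j : ℤ) : ℝ)) := by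
          rw [hcast, Matrix.mulVec_mulVec]
          congr 1
          rw [hBform, Matrix.mul_assoc, hWrUr, Matrix.mul_one]
        have h2 : (Mᵀ)⁻¹.mulVec (fun j => ((z j : ℤ) : ℝ)) r
            = B.mulVec (fun p => ((cI p : ℤ) : ℝ)) r := by rw [h1]
        rw [h2, Matrix.mulVec, dotProduct]
        apply Finset.sum_congr rfl
        intro p _
        ring
      have hc0 : ∀ j : Fin k, cI (σ (Sum.inl j)) = 0 := by
        intro j
        have hperp : ⟪b j, v⟫ = 0 :=
          (Submodule.mem_orthogonal L v).mp hvp (b j) (hbmem j).1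
        have hcomp : ⟪b j, v⟫ = (cI (σ (Sum.inl j)) : ℝ) := by
          rw [euclid_inner_eq]
          have h3 : ∀ r, b j r * v r = ∑ p, (cI p : ℝ) * (Aᵀ (σ (Sum.inl j)) r * B r p) := by
            intro r
            rw [hbcol j r, hvB r, Finset.mul_sum]
            apply Finset.sum_congr rfl
            intro p _
            show A r (σ (Sum.inl j)) * ((cI p : ℝ) * B r p) = _
            rw [Matrix.transpose_apply]
            ring
          rw [Finset.sum_congr rfl (fun r _ => h3 r), Finset.sum_comm]
          have h4 : ∀ p ∈ Finset.univ, ∑ r, (cI p : ℝ) * (Aᵀ (σ (Sum.inl j)) r * B r p)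
              = (cI p : ℝ) * (Aᵀ * B) (σ (Sum.inl j)) p := by
            intro p _
            rw [Matrix.mul_apply, Finset.mul_sum]
          rw [Finset.sum_congr rfl h4]
          simp [hAtB, Matrix.one_apply, mul_ite, mul_one, mul_zero]
        rw [hcomp] at hperp
        exact_mod_cast hperp
      refine ⟨fun i => cI (σ (Sum.inr i)), ?_⟩
      ext r
      rw [euclid_sum_apply]
      rw [hvB r]
      rw [← Equiv.sum_comp σ (fun p => (cI p : ℝ) * B r p)]
      rw [Fintype.sum_sum_type]
      have h5 : ∀ j : Fin k, (cI (σ (Sum.inl j)) : ℝ) * B r (σ (Sum.inl j)) = 0 := by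
        intro j; rw [hc0 j]; simp
      rw [Finset.sum_congr rfl (fun j _ => h5 j)]
      simp only [Finset.sum_const_zero, zero_add]
      apply Finset.sum_congr rfl
      intro i _
      rfl
    · rintro ⟨c, rfl⟩
      constructor
      · exact Submodule.sum_mem _ (fun i _ => Submodule.smul_mem _ _ (hbpLperp i))
      · refine ⟨∑ i, c i • (fun l => W l (σ (Sum.inr i))), ?_⟩
        intro r
        rw [key_comb Finset.univ (Mᵀ)⁻¹ (fun i => (c i : ℝ))
          (fun i => fun l => W l (σ (Sum.inr i))) bp hbpcol r, ← cast_sum_smul]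
  -- Gram determinant equality
  set G : Matrix (Fin d) (Fin d) ℝ := Aᵀ * A with hG
  haveI instG : Invertible G := invertibleMul Aᵀ A
  have hABt : A * Bᵀ = 1 := by
    have h := congrArg Matrix.transpose hBAt
    rwa [Matrix.transpose_mul, Matrix.transpose_transpose, Matrix.transpose_one] at h
  have hBtA : Bᵀ * A = 1 := by
    have h := congrArg Matrix.transpose hAtB
    rwa [Matrix.transpose_mul, Matrix.transpose_transpose, Matrix.transpose_one] at h
  have hGBB : G * (Bᵀ * B) = 1 := by
    rw [hG]
    calc Aᵀ * A * (Bᵀ * B) = Aᵀ * (A * Bᵀ) * B := by noncomm_ring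
    _ = Aᵀ * B := by rw [hABt, Matrix.mul_one]
    _ = 1 := hAtB
  have hBtB : Bᵀ * B = ⅟G := (invOf_eq_right_inv hGBB).symm
  set G' : Matrix ((Fin k) ⊕ (Fin (d - k))) ((Fin k) ⊕ (Fin (d - k))) ℝ :=
    G.submatrix σ σ with hG'
  set H' : Matrix ((Fin k) ⊕ (Fin (d - k))) ((Fin k) ⊕ (Fin (d - k))) ℝ :=
    (⅟G).submatrix σ σ with hH'
  have hGH : G' * H' = 1 := by
    rw [hG', hH', Matrix.submatrix_mul_equiv, mul_invOf_self, Matrix.submatrix_one_equiv]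
  have hHG : H' * G' = 1 := by
    rw [hG', hH', Matrix.submatrix_mul_equiv, invOf_mul_self, Matrix.submatrix_one_equiv]
  have hGb : G'.toBlocks₁₁ = Matrix.of (fun i j => ⟪b i, b j⟫) := by
    ext i j
    show G (σ (Sum.inl i)) (σ (Sum.inl j)) = ⟪b i, b j⟫
    rw [euclid_inner_eq, hG, Matrix.mul_apply]
    apply Finset.sum_congr rfl
    intro r _
    rw [Matrix.transpose_apply, ← hbcol i r, ← hbcol j r]
  have hGbp : H'.toBlocks₂₂ = Matrix.of (fun i j => ⟪bp i, bp j⟫) := by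
    ext i j
    show (⅟G) (σ (Sum.inr i)) (σ (Sum.inr j)) = ⟪bp i, bp j⟫
    rw [← hBtB, euclid_inner_eq, Matrix.mul_apply]
    apply Finset.sum_congr rfl
    intro r _
    rfl
  have hdet11 : (G'.toBlocks₁₁).det ≠ 0 := by rw [hGb]; exact gram_det_ne_zero hbind
  haveI : Invertible (G'.toBlocks₁₁) :=
    (G'.toBlocks₁₁).invertibleOfIsUnitDet (isUnit_iff_ne_zero.mpr hdet11)
  have hjac := jacobi_block G' H' hGH hHG
  have hdetG : G'.det = 1 := by
    rw [hG', Matrix.det_submatrix_equiv_self, hG, Matrix.det_mul, Matrix.det_transpose, hA,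
      Matrix.det_mul, hM, one_mul]
    have h1 : Uℝ.det = (U.det : ℝ) := by rw [hUR]; exact ((Int.castRingHom ℝ).map_det U).symm
    rcases Int.isUnit_iff.mp (Matrix.isUnit_det_of_invertible U) with h | h <;>
      rw [h1, h] <;> norm_num
  have hgramEq : (Matrix.of fun i j => (⟪bp i, bp j⟫ : ℝ)).det
      = (Matrix.of fun i j => (⟪b i, b j⟫ : ℝ)).det := by
    rw [← hGb, ← hGbp, ← hjac, hdetG, mul_one]
  -- conclude
  refine ⟨bp, ?_, hbpind, hspan2, ?_⟩
  · intro i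
    exact ⟨hbpLperp i, hbpΛd i⟩
  · rw [hgramEq]
end

section
/- Let ρ = (ρ₁,…,ρ_n) be positive weights summing to 1 and let Θ ∈ ℝ^{n×1} be a column with θ_{k1} irrational, where k is minimal such that θ_{k1} is irrational. Then the uniform weighted Diophantine exponent satisfies ω̂(Θ) ≤ ρ_k⁻¹; that is, for every γ > ρ_k⁻¹ there exist arbitrarily large t such that the system |x| ≤ t, max_i |θ_{i1}x − y_i|^{1/ρ_i} ≤ t^{−γ} has no nonzero integer solution (x, y₁,…,y_n). -/
private lemma size_contra (δ X ε₀ e₁ a b d : ℝ)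
    (hδ : 1 < δ) (hX2 : 2 ≤ X) (hX4 : (4:ℝ) ^ (δ-1)⁻¹ ≤ X)
    (hε₀pos : 0 < ε₀) (he₁nonneg : 0 ≤ e₁) (he₁lt : e₁ < ε₀)
    (hab : a ≤ b) (hbX : b = X + 1) (hapos : 0 < a)
    (h1le : 1 ≤ d) (hdb : d ≤ a * e₁ + b * ε₀) (hε₀X : ε₀ ≤ X ^ (-δ)) : False := by
  have hXpos : 0 < X := by linarith
  have hfinal : (1:ℝ) ≤ 2 * (X + 1) * X ^ (-δ) := by
    calc (1:ℝ) ≤ d := h1le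
      _ ≤ a * e₁ + b * ε₀ := hdb
      _ ≤ b * ε₀ + b * ε₀ := by nlinarith
      _ = 2 * (X + 1) * ε₀ := by rw [hbX]; ring
      _ ≤ 2 * (X + 1) * X ^ (-δ) := by nlinarith [Real.rpow_nonneg hXpos.le (-δ)]
  have hXδ1 : (4:ℝ) ≤ X ^ (δ - 1) := by
    calc (4:ℝ) = ((4:ℝ) ^ (δ-1)⁻¹) ^ (δ - 1) :=
          (Real.rpow_inv_rpow (by norm_num) (by linarith)).symm
      _ ≤ X ^ (δ - 1) :=
          Real.rpow_le_rpow (Real.rpow_nonneg (by norm_num) _) hX4 (by linarith)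
  have hXδ : 4 * X ≤ X ^ δ := by
    have h : X ^ δ = X ^ (δ - 1) * X := by
      rw [← Real.rpow_add_one hXpos.ne' (δ - 1)]; ring_nf
    rw [h]
    nlinarith
  have hXδpos : 0 < X ^ δ := Real.rpow_pos_of_pos hXpos δ
  have hneg : X ^ (-δ) = (X ^ δ)⁻¹ := Real.rpow_neg hXpos.le δ
  rw [hneg] at hfinal
  have hcontr : X ^ δ ≤ 2 * (X + 1) := by
    have h7 := mul_le_mul_of_nonneg_left hfinal hXδpos.le
    rw [mul_one, mul_comm (2 * (X+1)) _, ← mul_assoc, mul_inv_cancel₀ hXδpos.ne', one_mul] at h7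
    exact h7
  nlinarith

set_option maxHeartbeats 1000000 in
open Finset in
private lemma key_approx (θ : ℝ) (hθ : Irrational θ) (δ : ℝ) (hδ : 1 < δ) (T : ℝ) :
    ∃ t : ℝ, T ≤ t ∧ 1 < t ∧ ∀ x : ℤ, x ≠ 0 → |(x : ℝ)| ≤ t → ∀ p : ℤ,
      t ^ (-δ) < |θ * (x : ℝ) - (p : ℝ)| := by
  by_contra hcon
  push_neg at hcon
  set T₀ : ℝ := max (max T 2) (4 ^ (δ - 1)⁻¹) with hT₀
  have hT₀2 : 2 ≤ T₀ := le_trans (le_max_right T 2) (le_max_left _ _)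
  have hT₀T : T ≤ T₀ := le_trans (le_max_left T 2) (le_max_left _ _)
  have hT₀4 : (4:ℝ) ^ (δ - 1)⁻¹ ≤ T₀ := le_max_right _ _
  set f : ℕ → ℝ := fun q => |θ * q - round (θ * q)| with hf
  have hfpos : ∀ q : ℕ, q ≠ 0 → 0 < f q := by
    intro q hq
    have h1 : Irrational (θ * q) := hθ.mul_natCast hq
    have h2 := h1.ne_int (round (θ * (q:ℝ)))
    simpa [hf, abs_pos, sub_ne_zero] using h2
  have hne : ∀ N : ℕ, (Finset.Icc 1 (N+1)).Nonempty :=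
    fun N => ⟨1, Finset.mem_Icc.mpr ⟨le_refl 1, Nat.le_add_left 1 N⟩⟩
  set E : ℕ → ℝ := fun N => (Finset.Icc 1 (N+1)).inf' (hne N) f with hEdef
  have hEanti : ∀ m n : ℕ, m ≤ n → E n ≤ E m := by
    intro m n hmn
    exact Finset.inf'_mono f (Finset.Icc_subset_Icc le_rfl (by omega)) (hne m)
  have hEnonneg : ∀ N, 0 ≤ E N := by
    intro N
    obtain ⟨q, hq, hfq⟩ := Finset.exists_mem_eq_inf' (hne N) f
    have h0 : E N = f q := hfq
    rw [h0]; exact abs_nonneg _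
  have hEpos : ∀ N, 0 < E N := by
    intro N
    obtain ⟨q, hq, hfq⟩ := Finset.exists_mem_eq_inf' (hne N) f
    have h0 : E N = f q := hfq
    rw [h0]
    exact hfpos q (by simp only [Finset.mem_Icc] at hq; omega)
  -- From the negated statement: for every large N, E N ≤ (N+1)^(-δ)
  have H : ∀ N : ℕ, T₀ ≤ (N:ℝ) + 1 → E N ≤ ((N:ℝ) + 1) ^ (-δ) := by
    intro N hN
    obtain ⟨x, hx0, hxle, p, hp⟩ := hcon ((N:ℝ)+1) (le_trans hT₀T hN)
      (by linarith)
    set q : ℕ := x.natAbs with hq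
    have hqcast : (q:ℝ) = |(x:ℝ)| := by
      rw [hq, Nat.cast_natAbs, Int.cast_abs]
    have hq0 : q ≠ 0 := by simpa [hq, Int.natAbs_eq_zero] using hx0
    have hqle : q ≤ N + 1 := by
      have : (q:ℝ) ≤ (N:ℝ) + 1 := hqcast ▸ hxle
      exact_mod_cast (by push_cast; linarith : (q:ℝ) ≤ ((N+1:ℕ):ℝ)) |>.trans_eq rfl
        |> fun h => Nat.cast_le.mp h
    have hqmem : q ∈ Finset.Icc 1 (N+1) := Finset.mem_Icc.mpr ⟨Nat.one_le_iff_ne_zero.mpr hq0, hqle⟩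
    -- find p' with |θ*q - p'| = |θ*x - p|
    have hex : ∃ p' : ℤ, |θ * (q:ℝ) - (p':ℝ)| = |θ * (x:ℝ) - (p:ℝ)| := by
      rcases le_or_gt 0 x with hx | hx
      · refine ⟨p, ?_⟩
        have : (q:ℝ) = (x:ℝ) := by rw [hqcast, abs_of_nonneg (by exact_mod_cast hx)]
        rw [this]
      · refine ⟨-p, ?_⟩
        have : (q:ℝ) = -(x:ℝ) := by
          rw [hqcast, abs_of_neg (by exact_mod_cast hx)]
        rw [this]
        push_cast
        rw [← abs_neg]
        ring_nf
    obtain ⟨p', hp'⟩ := hex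
    calc E N ≤ f q := Finset.inf'_le f hqmem
      _ ≤ |θ * (q:ℝ) - (p':ℝ)| := round_le _ p'
      _ = |θ * (x:ℝ) - (p:ℝ)| := hp'
      _ ≤ ((N:ℝ)+1) ^ (-δ) := hp
  -- base point
  set N₀ : ℕ := ⌈T₀⌉₊ with hN₀
  have hN₀T : T₀ ≤ (N₀:ℝ) := Nat.le_ceil T₀
  set ε₀ : ℝ := E N₀ with hε₀def
  have hε₀pos : 0 < ε₀ := hEpos N₀
  -- E gets below ε₀
  have hP : ∃ N, E N < ε₀ := by
    set N : ℕ := max (N₀ + 1) ⌈ε₀⁻¹⌉₊ with hN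
    refine ⟨N, ?_⟩
    have hNN₀ : N₀ + 1 ≤ N := le_max_left _ _
    have hNb : (1:ℝ) ≤ (N:ℝ) + 1 := by
      have : (0:ℝ) ≤ (N:ℝ) := Nat.cast_nonneg N
      linarith
    have h1 : E N ≤ ((N:ℝ)+1) ^ (-δ) := by
      apply H
      have : (N₀:ℝ) ≤ (N:ℝ) := by exact_mod_cast le_trans (Nat.le_succ _) hNN₀
      linarith
    have h2 : ((N:ℝ)+1) ^ (-δ) ≤ ((N:ℝ)+1) ^ (-(1:ℝ)) :=
      Real.rpow_le_rpow_of_exponent_le hNb (by linarith)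
    have h3 : ((N:ℝ)+1) ^ (-(1:ℝ)) = ((N:ℝ)+1)⁻¹ := Real.rpow_neg_one _
    have h4 : ε₀⁻¹ < (N:ℝ) + 1 := by
      have : (⌈ε₀⁻¹⌉₊ : ℝ) ≤ (N:ℝ) := by exact_mod_cast le_max_right (N₀+1) ⌈ε₀⁻¹⌉₊
      have := Nat.le_ceil ε₀⁻¹
      linarith
    have h5 : ((N:ℝ)+1)⁻¹ < ε₀ := by
      have hNpos : (0:ℝ) < (N:ℝ) + 1 := by positivity
      rw [inv_lt_comm₀ hNpos hε₀pos]
      exact h4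
    linarith
  have hN₁spec' : E (Nat.find hP) < ε₀ := Nat.find_spec hP
  have hN₀N₁ : N₀ < Nat.find hP := by
    by_contra hle
    push_neg at hle
    have := hEanti (Nat.find hP) N₀ hle
    rw [← hε₀def] at this
    linarith
  obtain ⟨N₂, hN₁eq⟩ : ∃ m, Nat.find hP = m + 1 := ⟨Nat.find hP - 1, by omega⟩
  rw [hN₁eq] at hN₁spec'
  have hN₁spec : E (N₂ + 1) < ε₀ := hN₁spec'
  have hN₀N₂ : N₀ ≤ N₂ := by omega
  have h2 : ε₀ ≤ E N₂ := not_lt.mp (Nat.find_min hP (by omega))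
  have hTN₂ : T₀ ≤ (N₂:ℝ) + 1 := by
    have : (N₀:ℝ) ≤ (N₂:ℝ) := by exact_mod_cast hN₀N₂
    linarith
  have h3 : E N₂ ≤ ((N₂:ℝ) + 1) ^ (-δ) := H N₂ hTN₂
  -- the minimizer for E (N₂+1) is exactly N₂+2
  obtain ⟨q₁, hq₁mem, hq₁⟩ := Finset.exists_mem_eq_inf' (hne (N₂+1)) f
  have hq₁eq : q₁ = N₂ + 2 := by
    by_contra hq₁ne
    simp only [Finset.mem_Icc] at hq₁mem
    have hq₁le : q₁ ≤ N₂ + 1 := by omega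
    have : E N₂ ≤ f q₁ := Finset.inf'_le f (Finset.mem_Icc.mpr ⟨hq₁mem.1, hq₁le⟩)
    rw [← hq₁] at this
    exact absurd (lt_of_lt_of_le hN₁spec h2) (not_lt.mpr this)
  obtain ⟨q₀, hq₀mem, hq₀⟩ := Finset.exists_mem_eq_inf' (hne N₀) f
  simp only [Finset.mem_Icc] at hq₀mem
  -- set up the determinant argument
  set a : ℕ := q₀ with ha
  set b : ℕ := N₂ + 2 with hb
  have hab : a ≤ b := by omega
  have ha1 : 1 ≤ a := hq₀mem.1
  set pa : ℤ := round (θ * (a:ℝ)) with hpa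
  set pb : ℤ := round (θ * (b:ℝ)) with hpb
  have hea : |θ * (a:ℝ) - (pa:ℝ)| = ε₀ := hq₀.symm
  have heb : |θ * (b:ℝ) - (pb:ℝ)| = E (N₂+1) := by
    have h0 : E (N₂+1) = f q₁ := hq₁
    rw [h0, hq₁eq]
  set e₁ : ℝ := E (N₂ + 1) with he₁
  have he₁nonneg : 0 ≤ e₁ := hEnonneg _
  have he₁lt : e₁ < ε₀ := hN₁spec
  set det : ℤ := (a:ℤ) * pb - (b:ℤ) * pa with hdetdef
  have hbpos : (0:ℝ) < (b:ℝ) := by positivity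
  have hapos : (0:ℝ) < (a:ℝ) := by exact_mod_cast Nat.lt_of_lt_of_le Nat.zero_lt_one ha1
  have hdet : det ≠ 0 := by
    intro h0
    have hcast : (a:ℝ) * (pb:ℝ) = (b:ℝ) * (pa:ℝ) := by
      have : ((a:ℤ) * pb : ℤ) = (b:ℤ) * pa := by omega
      exact_mod_cast this
    have hkey : (b:ℝ) * (θ * a - pa) = (a:ℝ) * (θ * b - pb) := by linear_combination hcast
    have h5 : (b:ℝ) * ε₀ = (a:ℝ) * e₁ := by
      have := congrArg abs hkey
      rw [abs_mul, abs_mul, hea, heb, abs_of_pos hbpos, abs_of_pos hapos] at this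
      exact this
    nlinarith [mul_le_mul_of_nonneg_right (show (a:ℝ) ≤ b by exact_mod_cast hab) he₁nonneg]
  have h1le : (1:ℝ) ≤ |(det:ℝ)| := by
    rw [← Int.cast_abs]
    exact_mod_cast Int.one_le_abs hdet
  have hdetbound : |(det:ℝ)| ≤ (a:ℝ) * e₁ + (b:ℝ) * ε₀ := by
    have hexp : (det:ℝ) = (a:ℝ) * ((pb:ℝ) - θ * b) + (b:ℝ) * (θ * a - pa) := by
      rw [hdetdef]; push_cast; ring
    rw [hexp]
    calc |(a:ℝ) * ((pb:ℝ) - θ * b) + (b:ℝ) * (θ * a - pa)|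
        ≤ |(a:ℝ) * ((pb:ℝ) - θ * b)| + |(b:ℝ) * (θ * a - pa)| := abs_add_le _ _
      _ = (a:ℝ) * e₁ + (b:ℝ) * ε₀ := by
          rw [abs_mul, abs_mul, abs_of_pos hapos, abs_of_pos hbpos, abs_sub_comm, heb, hea]
  -- now the size estimate
  have hε₀X : ε₀ ≤ ((N₂:ℝ)+1) ^ (-δ) := le_trans h2 h3
  have hX2 : 2 ≤ (N₂:ℝ) + 1 := le_trans hT₀2 hTN₂
  have hX4 : (4:ℝ) ^ (δ-1)⁻¹ ≤ (N₂:ℝ) + 1 := le_trans hT₀4 hTN₂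
  have hbX : (b:ℝ) = ((N₂:ℝ) + 1) + 1 := by rw [hb]; push_cast; ring
  exact size_contra δ ((N₂:ℝ)+1) ε₀ e₁ (a:ℝ) (b:ℝ) |(det:ℝ)| hδ hX2 hX4
    hε₀pos he₁nonneg he₁lt (by exact_mod_cast hab) hbX hapos h1le hdetbound hε₀X


/-- Let `ρ` be positive weights summing to 1 and `θ ∈ ℝ^{n×1}` a column with
`θ k` irrational, `k` minimal such. Then the uniform weighted Diophantine
exponent is at most `ρ k⁻¹`: for every `γ > (ρ k)⁻¹` there exist arbitrarily
large `t` such that the system `|x| ≤ t`, `max_i |θ i · x - y i|^{1/ρ i} ≤ t^{-γ}`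
has no nonzero integer solution. -/
theorem uniform_exponent_upper_bound_one_column (n : ℕ) (ρ : Fin n → ℝ)
    (hρpos : ∀ i, 0 < ρ i) (hρsum : ∑ i, ρ i = 1)
    (θ : Fin n → ℝ) (k : Fin n) (hk : Irrational (θ k))
    (hkmin : ∀ i : Fin n, i < k → ¬ Irrational (θ i))
    (γ : ℝ) (hγ : γ > (ρ k)⁻¹) :
    ∀ T : ℝ, ∃ t : ℝ, T ≤ t ∧
      ¬ ∃ (x : ℤ) (y : Fin n → ℤ), (x ≠ 0 ∨ y ≠ 0) ∧
        |(x : ℝ)| ≤ t ∧ ∀ i, |θ i * (x : ℝ) - (y i : ℝ)| ^ (ρ i)⁻¹ ≤ t ^ (-γ) := by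
  have hρk := hρpos k
  have hγpos : 0 < γ := lt_trans (inv_pos.mpr hρk) hγ
  set δ : ℝ := γ * ρ k with hδdef
  have hδ : 1 < δ := by
    have := mul_lt_mul_of_pos_right hγ hρk
    rwa [inv_mul_cancel₀ hρk.ne'] at this
  intro T
  obtain ⟨t, hTt, ht1, hkey⟩ := key_approx (θ k) hk δ hδ T
  have ht0 : 0 < t := lt_trans one_pos ht1
  have htγ : t ^ (-γ) < 1 := Real.rpow_lt_one_of_one_lt_of_neg ht1 (by linarith)
  refine ⟨t, hTt, ?_⟩
  rintro ⟨x, y, hne, hx, hy⟩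
  by_cases hx0 : x = 0
  · subst hx0
    have hyne : y ≠ 0 := hne.resolve_left (by simp)
    obtain ⟨i, hi⟩ := Function.ne_iff.mp hyne
    have hyi : (1:ℝ) ≤ |(y i : ℝ)| := by
      rw [← Int.cast_abs]
      exact_mod_cast Int.one_le_abs hi
    have h := hy i
    rw [Int.cast_zero, mul_zero, zero_sub, abs_neg] at h
    have h1 : (1:ℝ) ≤ |(y i : ℝ)| ^ (ρ i)⁻¹ := by
      calc (1:ℝ) = (1:ℝ) ^ (ρ i)⁻¹ := (Real.one_rpow _).symm
        _ ≤ |(y i : ℝ)| ^ (ρ i)⁻¹ :=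
            Real.rpow_le_rpow (by norm_num) hyi (inv_pos.mpr (hρpos i)).le
    linarith
  · have h := hy k
    have habs : (0:ℝ) ≤ |θ k * (x:ℝ) - (y k : ℝ)| := abs_nonneg _
    have h2 := Real.rpow_le_rpow (Real.rpow_nonneg habs _) h hρk.le
    rw [Real.rpow_inv_rpow habs hρk.ne', ← Real.rpow_mul ht0.le] at h2
    have h3 : -γ * ρ k = -δ := by rw [hδdef]; ring
    rw [h3] at h2
    exact absurd h2 (not_le.mpr (hkey x hx0 hx (y k)))
end

section
/- Fix s > 1, δ > α > 1, S = s^{δ/α}, and let Σ ⊂ ℝ^{m+n} be a discrete set such that every 'leaf' Q(r,α) with s ≤ r ≤ S contains a point of Σ, while the root 'node' Q_s = Q(s,δ) contains no point of Σ. Then there exists r with s < r < S and a leaf Q(r',α) produced by the node Q_r (i.e., r' = r or r' = sS/r) containing two distinct points of Σ, one of which lies in Q_r. -/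
open Set

/-- If every 'leaf' `Q(r,α)`, `s ≤ r ≤ S`, contains a point of a discrete set
`Σ` while the root 'node' `Q_s = Q(s,δ)` contains none, then some leaf produced
by a node `Q_r`, `s < r < S`, contains two distinct points of `Σ`, one of which
lies in the node `Q_r`. -/
theorem there_is_a_good_leaf (m n : ℕ) (hm : 1 ≤ m) (hn : 1 ≤ n)
    (σ : Fin m → ℝ) (ρ : Fin n → ℝ)
    (hσpos : ∀ j, 0 < σ j) (hρpos : ∀ i, 0 < ρ i)
    (hσsum : ∑ j, σ j = 1) (hρsum : ∑ i, ρ i = 1)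
    (s δ α S : ℝ) (hs : 1 < s) (hα1 : 1 < α) (hαδ : α < δ)
    (hS : S = s ^ (δ / α))
    (Qnode Qleaf : ℝ → Set ((Fin m → ℝ) × (Fin n → ℝ)))
    (hQnode : ∀ r, Qnode r =
      {z | (∀ j, |z.1 j| ^ (σ j)⁻¹ ≤ (s * S / r) ^ (-α)) ∧
           (∀ i, |z.2 i| ^ (ρ i)⁻¹ ≤ r)})
    (hQleaf : ∀ r, Qleaf r =
      {z | (∀ j, |z.1 j| ^ (σ j)⁻¹ ≤ r ^ (-α)) ∧
           (∀ i, |z.2 i| ^ (ρ i)⁻¹ ≤ r)})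
    (Sig : Set ((Fin m → ℝ) × (Fin n → ℝ)))
    (hdisc : ∀ K : Set ((Fin m → ℝ) × (Fin n → ℝ)), IsCompact K → (Sig ∩ K).Finite)
    (hleaves : ∀ r : ℝ, s ≤ r → r ≤ S → ∃ v ∈ Sig, v ∈ Qleaf r)
    (hroot : ∀ v ∈ Sig, v ∉ Qnode s) :
    ∃ r r' : ℝ, s < r ∧ r < S ∧ (r' = r ∨ r' = s * S / r) ∧
      ∃ v w, v ∈ Sig ∧ w ∈ Sig ∧ v ≠ w ∧
        v ∈ Qleaf r' ∧ w ∈ Qleaf r' ∧ v ∈ Qnode r := by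
  classical
  have hα0 : (0:ℝ) < α := by linarith
  have hs0 : (0:ℝ) < s := by linarith
  have hsS : s < S := by
    rw [hS]
    nth_rewrite 1 [← Real.rpow_one s]
    exact Real.rpow_lt_rpow_of_exponent_lt hs (by rw [lt_div_iff₀ hα0]; linarith)
  have hS0 : (0:ℝ) < S := by linarith
  have hanti : ∀ x y : ℝ, 0 < x → x ≤ y → y ^ (-α) ≤ x ^ (-α) := fun x y hx hxy =>
    Real.rpow_le_rpow_of_nonpos hx hxy (by linarith)
  -- the root node in terms of leaves
  have hnode_s : ∀ w, w ∈ Qleaf s → w ∈ Qleaf S → w ∈ Qnode s := by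
    intro w hws hwS
    rw [hQleaf] at hws hwS
    rw [hQnode]
    refine ⟨fun j => ?_, fun i => hws.2 i⟩
    rw [mul_div_cancel_left₀ S (ne_of_gt hs0)]
    exact hwS.1 j
  -- a compact set containing all points of leaves
  set K : Set ((Fin m → ℝ) × (Fin n → ℝ)) :=
    (univ.pi fun j => Icc (-((s ^ (-α)) ^ σ j)) ((s ^ (-α)) ^ σ j)) ×ˢ
      (univ.pi fun i => Icc (-(S ^ ρ i)) (S ^ ρ i)) with hKdef
  have hKcomp : IsCompact K :=
    (isCompact_univ_pi fun j => isCompact_Icc).prod (isCompact_univ_pi fun i => isCompact_Icc)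
  have hmemK : ∀ v x, s ≤ x → x ≤ S → v ∈ Qleaf x → v ∈ K := by
    intro v x hx1 hx2 hv
    rw [hQleaf] at hv
    constructor
    · intro j _
      have h1 : |v.1 j| ^ (σ j)⁻¹ ≤ s ^ (-α) := le_trans (hv.1 j) (hanti s x hs0 hx1)
      have h2 : |v.1 j| ≤ (s ^ (-α)) ^ σ j := by
        have := Real.rpow_le_rpow (Real.rpow_nonneg (abs_nonneg _) _) h1 (hσpos j).le
        rwa [Real.rpow_inv_rpow (abs_nonneg _) (ne_of_gt (hσpos j))] at this
      exact abs_le.1 h2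
    · intro i _
      have h1 : |v.2 i| ^ (ρ i)⁻¹ ≤ S := le_trans (hv.2 i) hx2
      have h2 : |v.2 i| ≤ S ^ ρ i := by
        have := Real.rpow_le_rpow (Real.rpow_nonneg (abs_nonneg _) _) h1 (hρpos i).le
        rwa [Real.rpow_inv_rpow (abs_nonneg _) (ne_of_gt (hρpos i))] at this
      exact abs_le.1 h2
  have hfin : (Sig ∩ K).Finite := hdisc K hKcomp
  -- the (closed) set of parameters whose leaf contains v
  have hJclosed : ∀ v : (Fin m → ℝ) × (Fin n → ℝ),
      IsClosed {x | x ∈ Icc s S ∧ v ∈ Qleaf x} := by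
    intro v
    have hco : ContinuousOn (fun x : ℝ => x ^ (-α)) (Icc s S) :=
      ContinuousOn.rpow_const continuousOn_id
        (fun x hx => Or.inl (by intro h; rw [h] at hx; exact absurd hx.1 (by linarith)))
    have heq : {x | x ∈ Icc s S ∧ v ∈ Qleaf x} =
        Icc s S ∩ ((⋂ j, Icc s S ∩ (fun x : ℝ => x ^ (-α)) ⁻¹' Ici (|v.1 j| ^ (σ j)⁻¹)) ∩
          ⋂ i, Ici (|v.2 i| ^ (ρ i)⁻¹)) := by
      ext x
      simp only [hQleaf, mem_setOf_eq, mem_inter_iff, mem_iInter, mem_preimage, mem_Ici]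
      exact ⟨fun h => ⟨h.1, ⟨fun j => ⟨h.1, h.2.1 j⟩, h.2.2⟩⟩,
        fun h => ⟨h.1, ⟨fun j => (h.2.1 j).2, h.2.2⟩⟩⟩
    rw [heq]
    refine isClosed_Icc.inter (IsClosed.inter (isClosed_iInter fun j => ?_)
      (isClosed_iInter fun i => isClosed_Ici))
    exact hco.preimage_isClosed_of_isClosed isClosed_Icc isClosed_Ici
  -- the two closed pieces
  set T : Set ℝ :=
    ⋃ v ∈ {v | (v ∈ Sig ∧ v ∈ K) ∧ v ∉ Qleaf S}, {x | x ∈ Icc s S ∧ v ∈ Qleaf x} with hTdef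
  set T' : Set ℝ :=
    ⋃ v ∈ {v | (v ∈ Sig ∧ v ∈ K) ∧ v ∈ Qleaf S}, {x | x ∈ Icc s S ∧ v ∈ Qleaf x} with hT'def
  have hTc : IsClosed T :=
    Set.Finite.isClosed_biUnion (hfin.subset fun v hv => hv.1) (fun v _ => hJclosed v)
  have hT'c : IsClosed T' :=
    Set.Finite.isClosed_biUnion (hfin.subset fun v hv => hv.1) (fun v _ => hJclosed v)
  have hcover : Icc s S ⊆ T ∪ T' := by
    intro x hx
    obtain ⟨v, hvS, hvQ⟩ := hleaves x hx.1 hx.2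
    have hvK : v ∈ K := hmemK v x hx.1 hx.2 hvQ
    by_cases hvs : v ∈ Qleaf S
    · exact Or.inr (mem_biUnion ⟨⟨hvS, hvK⟩, hvs⟩ ⟨hx, hvQ⟩)
    · exact Or.inl (mem_biUnion ⟨⟨hvS, hvK⟩, hvs⟩ ⟨hx, hvQ⟩)
  have hsT : (Icc s S ∩ T).Nonempty := by
    obtain ⟨v, hvS, hvQ⟩ := hleaves s le_rfl hsS.le
    have hvns : v ∉ Qleaf S := fun h => hroot v hvS (hnode_s v hvQ h)
    exact ⟨s, ⟨le_rfl, hsS.le⟩,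
      mem_biUnion ⟨⟨hvS, hmemK v s le_rfl hsS.le hvQ⟩, hvns⟩ ⟨⟨le_rfl, hsS.le⟩, hvQ⟩⟩
  have hST' : (Icc s S ∩ T').Nonempty := by
    obtain ⟨v, hvS, hvQ⟩ := hleaves S hsS.le le_rfl
    exact ⟨S, ⟨hsS.le, le_rfl⟩,
      mem_biUnion ⟨⟨hvS, hmemK v S hsS.le le_rfl hvQ⟩, hvQ⟩ ⟨⟨hsS.le, le_rfl⟩, hvQ⟩⟩
  obtain ⟨x, hxIcc, hxT, hxT'⟩ :=
    (isPreconnected_closed_iff.1 isPreconnected_Icc) T T' hTc hT'c hcover hsT hST'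
  obtain ⟨v, hv, hxv⟩ := mem_iUnion₂.1 hxT
  obtain ⟨w, hw, hxw⟩ := mem_iUnion₂.1 hxT'
  -- x is strictly between s and S, and v ≠ w
  have hvw : v ≠ w := fun h => hv.2 (h ▸ hw.2)
  have hxS : x ≠ S := fun h => hv.2 (h ▸ hxv.2)
  have hxs : x ≠ s := by
    intro h
    exact hroot w hw.1.1 (hnode_s w (h ▸ hxw.2) hw.2)
  have hx1 : s < x := lt_of_le_of_ne hxIcc.1 (Ne.symm hxs)
  have hx2 : x < S := lt_of_le_of_ne hxIcc.2 hxS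
  have hx0 : (0:ℝ) < x := by linarith
  have hvQx := hxv.2
  have hwQx := hxw.2
  rw [hQleaf] at hvQx hwQx
  -- split according to the position of x relative to √(sS)
  rcases le_or_gt (x * x) (s * S) with hcase | hcase
  · -- use the node at r = sS/x; its second leaf is at x
    refine ⟨s * S / x, x, ?_, ?_, Or.inr ?_, v, w, hv.1.1, hw.1.1, hvw, hxv.2, hxw.2, ?_⟩
    · rw [lt_div_iff₀ hx0]; nlinarith
    · rw [div_lt_iff₀ hx0]; nlinarith
    · field_simp
    · rw [hQnode]
      have hxx : s * S / (s * S / x) = x := by field_simp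
      refine ⟨fun j => ?_, fun i => ?_⟩
      · rw [hxx]; exact hvQx.1 j
      · exact le_trans (hvQx.2 i) ((le_div_iff₀ hx0).2 hcase)
  · -- use the node at r = x; its first leaf is at x
    refine ⟨x, x, hx1, hx2, Or.inl rfl, v, w, hv.1.1, hw.1.1, hvw, hxv.2, hxw.2, ?_⟩
    rw [hQnode]
    have h1 : s * S / x ≤ x := (div_le_iff₀ hx0).2 (by nlinarith)
    have h2 : (0:ℝ) < s * S / x := div_pos (by positivity) hx0
    exact ⟨fun j => le_trans (hvQx.1 j) (hanti _ _ h2 h1), fun i => hvQx.2 i⟩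
end
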